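/- Let X be a reflexive real Banach space (the canonical inclusion of X into its double dual is surjective) and let Ω ⊊ X be a domain that is open in the weak topology of X. Then for every x ∈ Ω and r > 0, the open j-ball of Ω equals the intersection of the open j-balls of the punctured spaces: U_{j_Ω}(x, r) = ⋂_{z ∈ X ∖ Ω} U_{j_{X ∖ {z}}}(x, r), where U_{j_{X∖{z}}}(x,r) = {y ≠ z : log(1 + ‖x − y‖ / min(‖x − z‖, ‖y − z‖)) < r}. -/

import Mathlib

/-- The distance-ratio metric (j-metric) on a domain `Ω` of a Banach space:
`j_Ω(x,y) = log(1 + ‖x − y‖ / min(d(x), d(y)))` where `d(x) = dist(x, X ∖ Ω)`.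
For the punctured space `Ω = {z}ᶜ` one has `d(w) = ‖w - z‖`, so
`jDist {z}ᶜ x y = log(1 + ‖x − y‖ / min(‖x − z‖, ‖y − z‖))`. -/
noncomputable def jDist {X : Type*} [NormedAddCommGroup X]
    (Ω : Set X) (x y : X) : ℝ :=
  Real.log (1 + ‖x - y‖ / min (Metric.infDist x Ωᶜ) (Metric.infDist y Ωᶜ))

section Aux

open Metric NormedSpace

variable {X : Type*} [NormedAddCommGroup X] [NormedSpace ℝ X]


lemma incl_injective : Function.Injective (inclusionInDoubleDual ℝ X) := by
  intro a b h
  rw [eq_iff_forall_dual_eq ℝ]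
  intro g
  have := congrFun (congrArg DFunLike.coe h) g
  simpa using this

lemma norm_incl (v : X) : ‖inclusionInDoubleDual ℝ X v‖ = ‖v‖ :=
  (inclusionInDoubleDualLi ℝ (E := X)).norm_map v

/-- For a reflexive space, the weak space is homeomorphic to the weak-star double dual. -/
noncomputable def weakHomeo (hrefl : Function.Surjective (inclusionInDoubleDual ℝ X)) :
    WeakSpace ℝ X ≃ₜ WeakDual ℝ (StrongDual ℝ X) where
  toFun x := inclusionInDoubleDual ℝ X x
  invFun := Function.surjInv hrefl
  left_inv x := Function.leftInverse_surjInv ⟨incl_injective, hrefl⟩ x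
  right_inv x := Function.surjInv_eq hrefl x
  continuous_toFun := by
    apply WeakBilin.continuous_of_continuous_eval
    intro φ
    exact WeakBilin.eval_continuous ((topDualPairing ℝ X).flip) φ
  continuous_invFun := by
    apply WeakBilin.continuous_of_continuous_eval
    intro φ
    have : (fun F : WeakDual ℝ (StrongDual ℝ X) =>
        ((topDualPairing ℝ X).flip) (Function.surjInv hrefl F) φ) = fun F => F φ := by
      funext F
      conv_rhs => rw [← Function.surjInv_eq hrefl F]
      rfl
    exact (congrArg Continuous this).mpr
      (WeakBilin.eval_continuous (topDualPairing ℝ (StrongDual ℝ X)) φ)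

lemma isClosed_image_closedBall (w : X) (R : ℝ) :
    IsClosed (toWeakSpace ℝ X '' closedBall w R) := by
  have h := (convex_closedBall w R).toWeakSpace_closure (𝕜 := ℝ)
  rw [IsClosed.closure_eq Metric.isClosed_closedBall] at h
  exact closure_eq_iff_isClosed.mp h.symm

lemma isCompact_weak_of_isClosed_bounded (hrefl : Function.Surjective (inclusionInDoubleDual ℝ X))
    {S : Set X} (hS : IsClosed (toWeakSpace ℝ X '' S)) (w : X) (R : ℝ)
    (hSB : S ⊆ closedBall w R) :
    IsCompact (toWeakSpace ℝ X '' S) := by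
  set H := weakHomeo hrefl
  rw [← Homeomorph.isCompact_image (h := H)]
  apply IsCompact.of_isClosed_subset
    (WeakDual.isCompact_closedBall (inclusionInDoubleDual ℝ X w) R)
    (H.isClosedMap _ hS)
  rintro _ ⟨_, ⟨z, hz, rfl⟩, rfl⟩
  have hzw : dist z w ≤ R := hSB hz
  show inclusionInDoubleDual ℝ X z ∈ closedBall (inclusionInDoubleDual ℝ X w) R
  rw [mem_closedBall]
  exact ((inclusionInDoubleDualLi ℝ (E := X)).dist_map z w).trans_le hzw

lemma exists_nearest (hrefl : Function.Surjective (inclusionInDoubleDual ℝ X))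
    {C : Set X} (hC : IsClosed (toWeakSpace ℝ X '' C)) (hne : C.Nonempty) (w : X) :
    ∃ z ∈ C, dist w z = infDist w C := by
  set d := infDist w C with hd
  have h1 : ∀ n : ℕ, (0:ℝ) < (n:ℝ) + 1 := fun n => by positivity
  set t : ℕ → Set (WeakSpace ℝ X) :=
    fun n => toWeakSpace ℝ X '' (C ∩ closedBall w (d + 1 / (n + 1))) with ht
  have hsub : ∀ n : ℕ, C ∩ closedBall w (d + 1 / ((n:ℝ) + 1)) ⊆ closedBall w (d + 1) := by
    intro n z hz
    refine closedBall_subset_closedBall ?_ hz.2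
    have : (1:ℝ) / ((n:ℝ) + 1) ≤ 1 :=
      div_le_one_of_le₀ (by linarith [(Nat.cast_nonneg n : (0:ℝ) ≤ n)]) (h1 n).le
    linarith
  have htclosed : ∀ n, IsClosed (t n) := by
    intro n
    simp only [ht]
    rw [Set.image_inter (toWeakSpace ℝ X).injective]
    exact hC.inter (isClosed_image_closedBall w _)
  have htne : ∀ n, (t n).Nonempty := by
    intro n
    have hpos : (0 : ℝ) < 1 / ((n:ℝ) + 1) := by positivity
    have : infDist w C < d + 1 / ((n:ℝ) + 1) := by rw [← hd]; linarith
    obtain ⟨z, hzC, hzd⟩ := (infDist_lt_iff hne).mp this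
    exact ⟨toWeakSpace ℝ X z, ⟨z, ⟨hzC, by rw [mem_closedBall, dist_comm]; exact hzd.le⟩, rfl⟩⟩
  have htmono : ∀ n, t (n + 1) ⊆ t n := by
    intro n
    simp only [ht]
    apply Set.image_mono
    apply Set.inter_subset_inter_right
    apply closedBall_subset_closedBall
    have : (1:ℝ) / ((n:ℝ) + 1 + 1) ≤ 1 / ((n:ℝ) + 1) :=
      one_div_le_one_div_of_le (h1 n) (by linarith)
    push_cast
    linarith
  have htcomp : IsCompact (t 0) :=
    isCompact_weak_of_isClosed_bounded hrefl (htclosed 0) w (d + 1) (hsub 0)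
  obtain ⟨y, hy⟩ := IsCompact.nonempty_iInter_of_sequence_nonempty_isCompact_isClosed
    t htmono htne htcomp htclosed
  simp only [Set.mem_iInter] at hy
  obtain ⟨z, ⟨hzC, -⟩, hzy⟩ := hy 0
  have hzball : ∀ n : ℕ, dist w z ≤ d + 1 / ((n:ℝ) + 1) := by
    intro n
    obtain ⟨z', ⟨-, hz'⟩, hz'y⟩ := hy n
    have : z' = z := (toWeakSpace ℝ X).injective (hz'y.trans hzy.symm)
    rw [← this, dist_comm]
    exact hz'
  refine ⟨z, hzC, le_antisymm ?_ (infDist_le_dist_of_mem hzC)⟩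
  refine le_of_forall_pos_le_add fun ε hε => ?_
  obtain ⟨n, hn⟩ := exists_nat_one_div_lt hε
  exact (hzball n).trans (by linarith)

lemma jDist_punctured (z w y : X) :
    jDist ({z}ᶜ : Set X) w y =
      Real.log (1 + ‖w - y‖ / min (dist w z) (dist y z)) := by
  simp [jDist, compl_compl, Metric.infDist_singleton]

end Aux

/-- For a reflexive Banach space `X` and a weakly open domain `Ω`, the open `j`-ball of `Ω`
is the intersection of the open `j`-balls of the punctured spaces `X ∖ {z}`, `z ∈ X ∖ Ω`. -/
theorem jOpenBall_eq_iInter_punctured_jOpenBalls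
    {X : Type*} [NormedAddCommGroup X] [NormedSpace ℝ X] [CompleteSpace X]
    (hrefl : Function.Surjective (NormedSpace.inclusionInDoubleDual ℝ X))
    (Ω : Set X) (hΩweakOpen : IsOpen ((toWeakSpace ℝ X) '' Ω))
    (hΩconn : IsConnected Ω) (hΩproper : Ω ≠ Set.univ)
    (x : X) (hx : x ∈ Ω) (r : ℝ) (hr : 0 < r) :
    {y ∈ Ω | jDist Ω x y < r} =
      ⋂ z ∈ Ωᶜ, {y ∈ ({z}ᶜ : Set X) | jDist ({z}ᶜ : Set X) x y < r} := by
  have hΩopen : IsOpen Ω := by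
    have h := hΩweakOpen.preimage (toWeakSpaceCLM ℝ X).continuous
    have he : (toWeakSpaceCLM ℝ X) ⁻¹' ((toWeakSpace ℝ X) '' Ω) = Ω := by
      ext a
      simp only [Set.mem_preimage, toWeakSpaceCLM_eq_toWeakSpace,
        (toWeakSpace ℝ X).injective.mem_set_image]
    rwa [he] at h
  have hΩcc : IsClosed (toWeakSpace ℝ X '' Ωᶜ) := by
    have h := hΩweakOpen.isClosed_compl
    rwa [← Set.image_compl_eq (toWeakSpace ℝ X).bijective] at h
  have hcne : Ωᶜ.Nonempty := Set.nonempty_compl.mpr hΩproper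
  have dpos : ∀ w ∈ Ω, 0 < Metric.infDist w Ωᶜ := fun w hw =>
    (hΩopen.isClosed_compl.notMem_iff_infDist_pos hcne).mp (by simpa using hw)
  have hdx : 0 < Metric.infDist x Ωᶜ := dpos x hx
  ext y
  simp only [Set.mem_setOf_eq, Set.mem_iInter, Set.mem_compl_iff, Set.mem_singleton_iff]
  constructor
  · rintro ⟨hyΩ, hjy⟩ z hz
    have hdy : 0 < Metric.infDist y Ωᶜ := dpos y hyΩ
    refine ⟨fun h => hz (h ▸ hyΩ), ?_⟩
    rw [jDist_punctured]
    have h1 : Metric.infDist x Ωᶜ ≤ dist x z := Metric.infDist_le_dist_of_mem hz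
    have h2 : Metric.infDist y Ωᶜ ≤ dist y z := Metric.infDist_le_dist_of_mem hz
    have hm : 0 < min (Metric.infDist x Ωᶜ) (Metric.infDist y Ωᶜ) := lt_min hdx hdy
    have hmz : min (Metric.infDist x Ωᶜ) (Metric.infDist y Ωᶜ) ≤ min (dist x z) (dist y z) :=
      min_le_min h1 h2
    refine lt_of_le_of_lt ?_ hjy
    simp only [jDist]
    gcongr
  · intro hmem
    have hyΩ : y ∈ Ω := by
      by_contra hy
      obtain ⟨hne, -⟩ := hmem y hy
      exact hne rfl
    have hdy : 0 < Metric.infDist y Ωᶜ := dpos y hyΩ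
    refine ⟨hyΩ, ?_⟩
    obtain ⟨zx, hzx, hzxd⟩ := exists_nearest hrefl hΩcc hcne x
    obtain ⟨zy, hzy, hzyd⟩ := exists_nearest hrefl hΩcc hcne y
    rcases le_total (Metric.infDist x Ωᶜ) (Metric.infDist y Ωᶜ) with hle | hle
    · obtain ⟨-, hj⟩ := hmem zx hzx
      have e2 : min (dist x zx) (dist y zx) = dist x zx :=
        min_eq_left (by
          rw [hzxd]
          exact hle.trans (Metric.infDist_le_dist_of_mem hzx))
      have e1 : min (Metric.infDist x Ωᶜ) (Metric.infDist y Ωᶜ) = Metric.infDist x Ωᶜ :=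
        min_eq_left hle
      have : jDist Ω x y = jDist ({zx}ᶜ : Set X) x y := by
        rw [jDist_punctured, e2, hzxd]
        simp only [jDist, e1]
      rw [this]
      exact hj
    · obtain ⟨-, hj⟩ := hmem zy hzy
      have e2 : min (dist x zy) (dist y zy) = dist y zy :=
        min_eq_right (by
          rw [hzyd]
          exact hle.trans (Metric.infDist_le_dist_of_mem hzy))
      have e1 : min (Metric.infDist x Ωᶜ) (Metric.infDist y Ωᶜ) = Metric.infDist y Ωᶜ :=
        min_eq_right hle
      have : jDist Ω x y = jDist ({zy}ᶜ : Set X) x y := by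
        rw [jDist_punctured, e2, hzyd]
        simp only [jDist, e1]
      rw [this]
      exact hj
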